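/- Let T > 0, λ > 0, n ∈ ℕ, and let ρ₁, β ≥ 0. Let D : ℝⁿ → ℝⁿ be a linear map whose operator norm (with respect to the Euclidean norm) is at most ρ₁, and let Φ : [0,T] → (linear maps ℝⁿ → ℝⁿ) be continuous with ‖Φ(t)‖ ≤ β for all t ∈ [0,T]. For a continuous f : [0,T] → ℝⁿ define g(t) = D(f(t)) + ∫₀ᵗ Φ(t−τ)(f(τ)) dτ. Then ‖g‖_λ ≤ (ρ₁ + β/λ)·‖f‖_λ, i.e., sup_{t∈[0,T]} e^{−λt}‖g(t)‖ ≤ (ρ₁ + β/λ)·sup_{t∈[0,T]} e^{−λt}‖f(t)‖. -/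

import Mathlib

open MeasureTheory Set

/-- The λ-norm contraction estimate: for `g t = D (f t) + ∫₀ᵗ Φ(t-τ)(f τ) dτ`,
one has `‖g‖_λ ≤ (ρ₁ + β/λ) ‖f‖_λ`, where `‖f‖_λ = sup_{t∈[0,T]} e^{-λ t} ‖f t‖`
(Euclidean norm on ℝⁿ). -/
theorem lambda_norm_contraction
    (T lam : ℝ) (hT : 0 < T) (hlam : 0 < lam) (n : ℕ) (ρ₁ β : ℝ)
    (hρ₁ : 0 ≤ ρ₁) (hβ : 0 ≤ β)
    (D : EuclideanSpace ℝ (Fin n) →L[ℝ] EuclideanSpace ℝ (Fin n)) (hD : ‖D‖ ≤ ρ₁)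
    (Φ : ℝ → (EuclideanSpace ℝ (Fin n) →L[ℝ] EuclideanSpace ℝ (Fin n)))
    (hΦcont : ContinuousOn Φ (Icc 0 T))
    (hΦbound : ∀ t ∈ Icc (0:ℝ) T, ‖Φ t‖ ≤ β)
    (f : ℝ → EuclideanSpace ℝ (Fin n)) (hf : ContinuousOn f (Icc 0 T))
    (g : ℝ → EuclideanSpace ℝ (Fin n))
    (hg : ∀ t ∈ Icc (0:ℝ) T, g t = D (f t) + ∫ τ in (0:ℝ)..t, (Φ (t - τ)) (f τ)) :
    (⨆ t : Icc (0:ℝ) T, Real.exp (-lam * t) * ‖g t‖) ≤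
      (ρ₁ + β / lam) * ⨆ t : Icc (0:ℝ) T, Real.exp (-lam * t) * ‖f t‖ := by
  have hne : Nonempty (Icc (0:ℝ) T) := ⟨⟨0, by constructor <;> [rfl; exact hT.le]⟩⟩
  set M : ℝ := ⨆ t : Icc (0:ℝ) T, Real.exp (-lam * t) * ‖f t‖ with hM
  -- boundedness of the family defining M
  have hFcont : ContinuousOn (fun t => Real.exp (-lam * t) * ‖f t‖) (Icc 0 T) := by
    apply ContinuousOn.mul
    · exact (Real.continuous_exp.comp (continuous_const.mul continuous_id)).continuousOn
    · exact hf.norm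
  have hbdd : BddAbove (Set.range (fun t : Icc (0:ℝ) T =>
      Real.exp (-lam * t) * ‖f t‖)) := by
    have := (isCompact_Icc.image_of_continuousOn hFcont).bddAbove
    rwa [Set.image_eq_range] at this
  have hMle : ∀ t : Icc (0:ℝ) T, Real.exp (-lam * t) * ‖f t‖ ≤ M :=
    fun t => le_ciSup hbdd t
  have hM0 : 0 ≤ M := by
    refine le_trans ?_ (hMle ⟨0, by constructor <;> [rfl; exact hT.le]⟩)
    positivity
  have hfb : ∀ τ ∈ Icc (0:ℝ) T, ‖f τ‖ ≤ Real.exp (lam * τ) * M := by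
    intro τ hτ
    have h := hMle ⟨τ, hτ⟩
    have hpos : (0:ℝ) < Real.exp (-lam * τ) := Real.exp_pos _
    calc ‖f τ‖ = Real.exp (lam * τ) * (Real.exp (-lam * τ) * ‖f τ‖) := by
          rw [← mul_assoc, ← Real.exp_add]; ring_nf; simp
      _ ≤ Real.exp (lam * τ) * M := by
          exact mul_le_mul_of_nonneg_left h (Real.exp_pos _).le
  refine ciSup_le fun ⟨t, ht⟩ => ?_
  obtain ⟨ht0, htT⟩ := ht
  rw [hg t ⟨ht0, htT⟩]
  -- bound the integral
  have hint : ‖∫ τ in (0:ℝ)..t, (Φ (t - τ)) (f τ)‖ ≤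
      ∫ τ in (0:ℝ)..t, β * (Real.exp (lam * τ) * M) := by
    have hib : IntervalIntegrable (fun τ => β * (Real.exp (lam * τ) * M))
        volume 0 t := by
      apply Continuous.intervalIntegrable
      exact continuous_const.mul
        ((Real.continuous_exp.comp (continuous_const.mul continuous_id)).mul continuous_const)
    have := intervalIntegral.norm_integral_le_abs_of_norm_le
      (f := fun τ => (Φ (t - τ)) (f τ)) (g := fun τ => β * (Real.exp (lam * τ) * M))
      (a := 0) (b := t) (μ := volume) ?_ hib
    · refine this.trans (le_of_eq (abs_of_nonneg ?_))
      apply intervalIntegral.integral_nonneg ht0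
      intro x _; positivity
    · filter_upwards [ae_restrict_mem measurableSet_uIoc] with τ hτ
      rw [uIoc_of_le ht0] at hτ
      obtain ⟨hτ0, hτt⟩ := hτ
      have hτIcc : τ ∈ Icc (0:ℝ) T := ⟨hτ0.le, hτt.trans htT⟩
      have htτ : t - τ ∈ Icc (0:ℝ) T := ⟨by linarith, by linarith⟩
      calc ‖(Φ (t - τ)) (f τ)‖ ≤ ‖Φ (t - τ)‖ * ‖f τ‖ := (Φ (t - τ)).le_opNorm _
        _ ≤ β * (Real.exp (lam * τ) * M) := by
            apply mul_le_mul (hΦbound _ htτ) (hfb τ hτIcc) (norm_nonneg _) hβ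
  -- compute the integral
  have hcalc : (∫ τ in (0:ℝ)..t, β * (Real.exp (lam * τ) * M)) =
      β * M * ((Real.exp (lam * t) - 1) / lam) := by
    have h1 : (∫ τ in (0:ℝ)..t, Real.exp (lam * τ)) =
        (Real.exp (lam * t) - 1) / lam := by
      rw [intervalIntegral.integral_comp_mul_left (fun x => Real.exp x) hlam.ne']
      rw [integral_exp]
      simp [smul_eq_mul, div_eq_inv_mul]
    calc (∫ τ in (0:ℝ)..t, β * (Real.exp (lam * τ) * M))
        = ∫ τ in (0:ℝ)..t, (β * M) * Real.exp (lam * τ) := by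
          congr 1; ext τ; ring
      _ = (β * M) * ∫ τ in (0:ℝ)..t, Real.exp (lam * τ) :=
          intervalIntegral.integral_const_mul _ _
      _ = β * M * ((Real.exp (lam * t) - 1) / lam) := by rw [h1]
  have hDf : ‖D (f t)‖ ≤ ρ₁ * ‖f t‖ :=
    (D.le_opNorm _).trans (mul_le_mul_of_nonneg_right hD (norm_nonneg _))
  have hexp_pos : (0:ℝ) < Real.exp (-lam * t) := Real.exp_pos _
  calc Real.exp (-lam * t) * ‖D (f t) + ∫ τ in (0:ℝ)..t, (Φ (t - τ)) (f τ)‖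
      ≤ Real.exp (-lam * t) * (ρ₁ * ‖f t‖ + β * M * ((Real.exp (lam * t) - 1) / lam)) := by
        apply mul_le_mul_of_nonneg_left _ hexp_pos.le
        refine (norm_add_le _ _).trans (add_le_add hDf (hint.trans (le_of_eq hcalc)))
    _ = ρ₁ * (Real.exp (-lam * t) * ‖f t‖)
        + β / lam * M * (1 - Real.exp (-lam * t)) := by
        rw [mul_add]
        congr 1
        · ring
        · have he : Real.exp (-lam * t) * Real.exp (lam * t) = 1 := by
            rw [← Real.exp_add, neg_mul, neg_add_cancel, Real.exp_zero]
          linear_combination (β * M / lam) * he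
    _ ≤ ρ₁ * M + β / lam * M * 1 := by
        apply add_le_add
        · exact mul_le_mul_of_nonneg_left (hMle ⟨t, ht0, htT⟩) hρ₁
        · apply mul_le_mul_of_nonneg_left _ (by positivity)
          have : 0 < Real.exp (-lam * t) := Real.exp_pos _
          linarith
    _ = (ρ₁ + β / lam) * M := by ring
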